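/- arXiv:2502.06264 — 6 statements merged into one kernel-verified Lean document; each statement's English description precedes it below -/
import Mathlib

section
/- Let K be a field, n, m ≥ 0, and let x_0, …, x_{n+m} ∈ K be pairwise distinct. Then in K[x] ⊗_K K[x] ⊗_K K[x] one has ∑_{k=0}^{n+m} (∑_{i=0}^n x_k^i a_i) ⊗ (∑_{j=0}^m x_k^j b_j) ⊗ c^{(k)} = T_{n,m}, i.e. the Toom–Cook representation represents the polynomial multiplication tensor for degrees n and m. -/
open Polynomial TensorProduct

lemma lagrange_pow_sum (K : Type) [Field K] (N d : ℕ) (x : ℕ → K)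
    (hinj : Set.InjOn x (Finset.range (N + 1))) (hd : d ≤ N) :
    ∑ k ∈ Finset.range (N + 1), C (x k ^ d) * Lagrange.basis (Finset.range (N + 1)) x k
      = (X : Polynomial K) ^ d := by
  have h : ∀ k, x k ^ d = ((X : Polynomial K) ^ d).eval (x k) := by simp
  calc ∑ k ∈ Finset.range (N + 1), C (x k ^ d) * Lagrange.basis (Finset.range (N + 1)) x k
      = Lagrange.interpolate (Finset.range (N + 1)) x
          (fun k => ((X : Polynomial K) ^ d).eval (x k)) := by
        rw [Lagrange.interpolate_apply]; simp_rw [← h]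
    _ = (X : Polynomial K) ^ d := by
        exact (Lagrange.eq_interpolate hinj (by
          rw [Polynomial.degree_X_pow, Finset.card_range]
          exact_mod_cast Nat.lt_succ_of_le hd)).symm

/-- Let `K` be a field, `n, m ≥ 0`, and let `x 0, …, x (n+m) ∈ K` be pairwise
distinct.  Then in `K[x] ⊗ K[x] ⊗ K[x]` the Toom–Cook representation
`∑_{k=0}^{n+m} (∑_{i=0}^n x_k^i a_i) ⊗ (∑_{j=0}^m x_k^j b_j) ⊗ c⁽ᵏ⁾` equals the polynomial
multiplication tensor `T_{n,m} = ∑_{i=0}^n ∑_{j=0}^m a_i ⊗ b_j ⊗ c_{i+j}`, where `c⁽ᵏ⁾` is the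
`k`-th Lagrange basis polynomial with respect to the nodes `x 0, …, x (n+m)`. -/
theorem toomCook_eq_mulTensor (K : Type) [Field K] (n m : ℕ) (x : ℕ → K)
    (hx : ∀ k ∈ Finset.range (n + m + 1), ∀ l ∈ Finset.range (n + m + 1),
      k ≠ l → x k ≠ x l) :
    ∑ k ∈ Finset.range (n + m + 1),
        (∑ i ∈ Finset.range (n + 1), C (x k ^ i) * X ^ i) ⊗ₜ[K]
          ((∑ j ∈ Finset.range (m + 1), C (x k ^ j) * X ^ j) ⊗ₜ[K]
            Lagrange.basis (Finset.range (n + m + 1)) x k)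
      = ∑ i ∈ Finset.range (n + 1), ∑ j ∈ Finset.range (m + 1),
          ((X : Polynomial K) ^ i) ⊗ₜ[K]
            (((X : Polynomial K) ^ j) ⊗ₜ[K] ((X : Polynomial K) ^ (i + j))) := by
  have hinj : Set.InjOn x (Finset.range (n + m + 1)) := by
    intro a ha b hb hab
    by_contra hne
    exact hx a (by simpa using ha) b (by simpa using hb) hne hab
  calc ∑ k ∈ Finset.range (n + m + 1),
        (∑ i ∈ Finset.range (n + 1), C (x k ^ i) * X ^ i) ⊗ₜ[K]
          ((∑ j ∈ Finset.range (m + 1), C (x k ^ j) * X ^ j) ⊗ₜ[K]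
            Lagrange.basis (Finset.range (n + m + 1)) x k)
      = ∑ k ∈ Finset.range (n + m + 1), ∑ i ∈ Finset.range (n + 1),
          ∑ j ∈ Finset.range (m + 1),
          ((X : Polynomial K) ^ i) ⊗ₜ[K] (((X : Polynomial K) ^ j) ⊗ₜ[K]
            (C (x k ^ (i + j)) * Lagrange.basis (Finset.range (n + m + 1)) x k)) := by
        apply Finset.sum_congr rfl
        intro k _
        rw [sum_tmul]
        apply Finset.sum_congr rfl
        intro i _
        rw [sum_tmul, tmul_sum]
        apply Finset.sum_congr rfl
        intro j _
        have h1 : C (x k ^ i) * (X : Polynomial K) ^ i = (x k ^ i) • (X ^ i) := by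
          rw [Polynomial.smul_eq_C_mul]
        have h2 : C (x k ^ j) * (X : Polynomial K) ^ j = (x k ^ j) • (X ^ j) := by
          rw [Polynomial.smul_eq_C_mul]
        simp only [← Polynomial.smul_eq_C_mul, smul_tmul, ← tmul_smul, smul_smul, pow_add]
    _ = ∑ i ∈ Finset.range (n + 1), ∑ j ∈ Finset.range (m + 1),
          ((X : Polynomial K) ^ i) ⊗ₜ[K] (((X : Polynomial K) ^ j) ⊗ₜ[K]
            ∑ k ∈ Finset.range (n + m + 1),
              C (x k ^ (i + j)) * Lagrange.basis (Finset.range (n + m + 1)) x k) := by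
        rw [Finset.sum_comm]
        apply Finset.sum_congr rfl
        intro i _
        rw [Finset.sum_comm]
        apply Finset.sum_congr rfl
        intro j _
        rw [tmul_sum, tmul_sum]
    _ = ∑ i ∈ Finset.range (n + 1), ∑ j ∈ Finset.range (m + 1),
          ((X : Polynomial K) ^ i) ⊗ₜ[K]
            (((X : Polynomial K) ^ j) ⊗ₜ[K] ((X : Polynomial K) ^ (i + j))) := by
        apply Finset.sum_congr rfl; intro i hi
        apply Finset.sum_congr rfl; intro j hj
        rw [lagrange_pow_sum K (n + m) (i + j) x hinj]
        simp only [Finset.mem_range] at hi hj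
        omega
end

section
/- Let K be a field containing at least n+m+1 distinct elements. Then there exist polynomials u_ℓ ∈ K[x] of degree ≤ n, v_ℓ ∈ K[x] of degree ≤ m, and w_ℓ ∈ K[x] of degree ≤ n+m, for ℓ = 1, …, n+m+1, such that T_{n,m} = ∑_{ℓ=1}^{n+m+1} u_ℓ ⊗ v_ℓ ⊗ w_ℓ. In particular, the rank of the polynomial multiplication tensor for degrees n and m is at most n+m+1. -/
open Polynomial TensorProduct

/-- Let `K` be a field containing at least `n+m+1` distinct elements.  Then
there exist polynomials `u ℓ` of degree `≤ n`, `v ℓ` of degree `≤ m`, and `w ℓ` of degree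
`≤ n+m`, for `ℓ = 1, …, n+m+1`, such that `T_{n,m} = ∑_ℓ u_ℓ ⊗ v_ℓ ⊗ w_ℓ`.  In particular, the
rank of the polynomial multiplication tensor for degrees `n` and `m` is at most `n+m+1`. -/
theorem mulTensor_rank_le (K : Type) [Field K] (n m : ℕ)
    (hK : ∃ s : Finset K, s.card = n + m + 1) :
    ∃ u v w : Fin (n + m + 1) → Polynomial K,
      (∀ l, (u l).degree ≤ (n : ℕ)) ∧
      (∀ l, (v l).degree ≤ (m : ℕ)) ∧
      (∀ l, (w l).degree ≤ ((n + m : ℕ))) ∧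
      ∑ l, (u l) ⊗ₜ[K] ((v l) ⊗ₜ[K] (w l))
        = ∑ i ∈ Finset.range (n + 1), ∑ j ∈ Finset.range (m + 1),
            ((X : Polynomial K) ^ i) ⊗ₜ[K]
              (((X : Polynomial K) ^ j) ⊗ₜ[K] ((X : Polynomial K) ^ (i + j))) := by
  classical
  obtain ⟨s, hs⟩ := hK
  -- an injective enumeration of the points
  set r := n + m + 1 with hr
  let e : Fin r → K := fun i => (s.equivFinOfCardEq hs).symm i
  have he : Function.Injective e := fun a b hab => by
    have := Subtype.ext hab
    simpa [e] using congrArg (s.equivFinOfCardEq hs) this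
  have heInj : Set.InjOn e (Finset.univ : Finset (Fin r)) := he.injOn
  have hcard : (Finset.univ : Finset (Fin r)).card = r := by simp
  -- the Lagrange basis polynomials
  let w : Fin r → Polynomial K := fun l => Lagrange.basis Finset.univ e l
  -- key interpolation fact
  have key : ∀ k : ℕ, k ≤ n + m →
      (X : Polynomial K) ^ k = ∑ l : Fin r, C (e l ^ k) * w l := by
    intro k hk
    have hdeg : ((X : Polynomial K) ^ k).degree < (Finset.univ : Finset (Fin r)).card := by
      rw [hcard, degree_X_pow]
      exact_mod_cast Nat.lt_succ_of_le hk
    have := Lagrange.eq_interpolate heInj hdeg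
    rw [Lagrange.interpolate_apply] at this
    simpa [w] using this
  refine ⟨fun l => ∑ i ∈ Finset.range (n + 1), C (e l ^ i) * X ^ i,
          fun l => ∑ j ∈ Finset.range (m + 1), C (e l ^ j) * X ^ j,
          w, ?_, ?_, ?_, ?_⟩
  · intro l
    refine (degree_sum_le _ _).trans ?_
    rw [Finset.sup_le_iff]
    intro i hi
    refine (degree_C_mul_X_pow_le _ _).trans ?_
    exact_mod_cast Nat.lt_succ_iff.mp (Finset.mem_range.mp hi)
  · intro l
    refine (degree_sum_le _ _).trans ?_
    rw [Finset.sup_le_iff]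
    intro j hj
    refine (degree_C_mul_X_pow_le _ _).trans ?_
    exact_mod_cast Nat.lt_succ_iff.mp (Finset.mem_range.mp hj)
  · intro l
    have := Lagrange.degree_basis heInj (Finset.mem_univ l)
    rw [hcard] at this
    simp only [w, this]
    norm_num [hr]
  · -- the tensor identity
    have main : ∀ l : Fin r,
        (∑ i ∈ Finset.range (n + 1), C (e l ^ i) * X ^ i) ⊗ₜ[K]
          ((∑ j ∈ Finset.range (m + 1), C (e l ^ j) * X ^ j) ⊗ₜ[K] w l)
        = ∑ i ∈ Finset.range (n + 1), ∑ j ∈ Finset.range (m + 1),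
            (C (e l ^ i) * X ^ i) ⊗ₜ[K] ((C (e l ^ j) * X ^ j) ⊗ₜ[K] w l) := by
      intro l
      rw [sum_tmul]
      refine Finset.sum_congr rfl fun i _ => ?_
      rw [sum_tmul, tmul_sum]
    rw [Finset.sum_congr rfl fun l _ => main l]
    rw [Finset.sum_comm]
    refine Finset.sum_congr rfl fun i hi => ?_
    rw [Finset.sum_comm]
    refine Finset.sum_congr rfl fun j hj => ?_
    have hij : i + j ≤ n + m :=
      Nat.add_le_add (Nat.lt_succ_iff.mp (Finset.mem_range.mp hi))
        (Nat.lt_succ_iff.mp (Finset.mem_range.mp hj))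
    rw [key (i + j) hij, tmul_sum, tmul_sum]
    refine Finset.sum_congr rfl fun l _ => ?_
    rw [← smul_eq_C_mul, ← smul_eq_C_mul, ← smul_eq_C_mul]
    rw [smul_tmul, smul_tmul', smul_smul, smul_tmul, pow_add]
end

section
/- Let K be a field, let x, y ∈ K with x ≠ y, and let c_y, T_0, T_1, …, T_n ∈ K[x] be arbitrary polynomials. It takes no more than 2n+1 flips to get from the representation consisting of the triple (∑_{i=0}^n x^i a_i, ∑_{j=0}^m x^j b_j, c_y + T_0), the triples ((y^i − x^i) a_i, ∑_{j=0}^m x^j b_j, c_y + T_i) for i = 1, …, n, and the triple (∑_{i=0}^n y^i a_i, ∑_{i=1}^m (y^i − x^i) b_i, c_y), to the representation consisting of the triple (∑_{i=0}^n x^i a_i, ∑_{j=0}^m x^j b_j, T_0), the triples ((y^i − x^i) a_i, ∑_{j=0}^m x^j b_j, T_i) for i = 1, …, n, and the triple (∑_{i=0}^n y^i a_i, ∑_{j=0}^m y^j b_j, c_y). -/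
open Polynomial TensorProduct

namespace FlipGraph

variable (K : Type) [Field K]

/-- A triple `(u, v, w)` of polynomials, standing for the rank-one tensor `u ⊗ v ⊗ w`. -/
abbrev Triple := Polynomial K × Polynomial K × Polynomial K

/-- The rank-one tensor `u ⊗ v ⊗ w` represented by a triple. -/
noncomputable def tensorOf (t : Triple K) :
    TensorProduct K (Polynomial K) (TensorProduct K (Polynomial K) (Polynomial K)) :=
  t.1 ⊗ₜ[K] (t.2.1 ⊗ₜ[K] t.2.2)

/-- The tensor represented by a representation (a multiset of triples). -/
noncomputable def tensorOfRep (S : Multiset (Triple K)) :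
    TensorProduct K (Polynomial K) (TensorProduct K (Polynomial K) (Polynomial K)) :=
  (S.map (tensorOf K)).sum

/-- Two representations are equivalent up to rescaling: each triple is replaced by another
triple representing the same rank-one tensor (nonzero scalar factors being moved between the
three components). Such rescalings are not counted as steps. -/
def ReEq (S S' : Multiset (Triple K)) : Prop :=
  S.map (tensorOf K) = S'.map (tensorOf K)

/-- A flip replaces two triples that agree in one position by two new triples: for a shared
first component and any `l ∈ K`, `(u, v₁, w₁), (u, v₂, w₂) ↦ (u, v₁ − l·v₂, w₁),
(u, v₂, w₂ + l·w₁)`, and analogously when the shared component is the second or the third. -/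
def IsFlip (S S' : Multiset (Triple K)) : Prop :=
  ∃ (T : Multiset (Triple K)) (l : K),
    (∃ u v₁ w₁ v₂ w₂, S = (u, v₁, w₁) ::ₘ (u, v₂, w₂) ::ₘ T ∧
        S' = (u, v₁ - l • v₂, w₁) ::ₘ (u, v₂, w₂ + l • w₁) ::ₘ T) ∨
    (∃ v u₁ w₁ u₂ w₂, S = (u₁, v, w₁) ::ₘ (u₂, v, w₂) ::ₘ T ∧
        S' = (u₁ - l • u₂, v, w₁) ::ₘ (u₂, v, w₂ + l • w₁) ::ₘ T) ∨
    (∃ w u₁ v₁ u₂ v₂, S = (u₁, v₁, w) ::ₘ (u₂, v₂, w) ::ₘ T ∧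
        S' = (u₁ - l • u₂, v₁, w) ::ₘ (u₂, v₂ + l • v₁, w) ::ₘ T)

/-- A reduction replaces two triples that agree in two positions by their sum in the remaining
position, e.g. `(u₁, v, w), (u₂, v, w) ↦ (u₁ + u₂, v, w)`. -/
def IsReduction (S S' : Multiset (Triple K)) : Prop :=
  ∃ T : Multiset (Triple K),
    (∃ u₁ u₂ v w, S = (u₁, v, w) ::ₘ (u₂, v, w) ::ₘ T ∧ S' = (u₁ + u₂, v, w) ::ₘ T) ∨
    (∃ u v₁ v₂ w, S = (u, v₁, w) ::ₘ (u, v₂, w) ::ₘ T ∧ S' = (u, v₁ + v₂, w) ::ₘ T) ∨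
    (∃ u v w₁ w₂, S = (u, v, w₁) ::ₘ (u, v, w₂) ::ₘ T ∧ S' = (u, v, w₁ + w₂) ::ₘ T)

/-- `Path K S S' f r` means that in the flip graph there is a path from representation `S` to
representation `S'` consisting of `f` flips and `r` reductions (interleaved with arbitrarily
many uncounted rescalings). -/
inductive Path : Multiset (Triple K) → Multiset (Triple K) → ℕ → ℕ → Prop
  | refl (S : Multiset (Triple K)) : Path S S 0 0
  | rescale {S S' T : Multiset (Triple K)} {f r : ℕ} :
      ReEq K S S' → Path S' T f r → Path S T f r
  | flip {S S' T : Multiset (Triple K)} {f r : ℕ} :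
      IsFlip K S S' → Path S' T f r → Path S T (f + 1) r
  | reduce {S S' T : Multiset (Triple K)} {f r : ℕ} :
      IsReduction K S S' → Path S' T f r → Path S T f (r + 1)

/-- The standard representation of the polynomial multiplication tensor `T_{n,m}`:
the multiset of triples `(a_i, b_j, c_{i+j})` for `0 ≤ i ≤ n`, `0 ≤ j ≤ m`. -/
noncomputable def stdRep (n m : ℕ) : Multiset (Triple K) :=
  (Finset.range (n + 1) ×ˢ Finset.range (m + 1)).val.map
    fun p => ((X : Polynomial K) ^ p.1, (X : Polynomial K) ^ p.2,
              (X : Polynomial K) ^ (p.1 + p.2))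

end FlipGraph

open FlipGraph

namespace FlipGraph

variable {K : Type} [Field K]

theorem Path.trans' {S T U : Multiset (Triple K)} {f r f' r' : ℕ}
    (h1 : Path K S T f r) (h2 : Path K T U f' r') : Path K S U (f + f') (r + r') := by
  induction h1 with
  | refl => simpa using h2
  | rescale h _ ih => exact Path.rescale h (ih h2)
  | flip h _ ih => rw [Nat.add_right_comm]; exact Path.flip h (ih h2)
  | reduce h _ ih => rw [Nat.add_right_comm]; exact Path.reduce h (ih h2)

theorem Path.cast' {S S' T T' : Multiset (Triple K)} {f r f' r' : ℕ}
    (hS : S = S') (hT : T = T') (hf : f = f') (hr : r = r')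
    (h : Path K S T f r) : Path K S' T' f' r' := by
  subst hS; subst hT; subst hf; subst hr; exact h

theorem batch' (l : K) (Q W0 : Polynomial K) (Tr : Multiset (Triple K))
    (L : Multiset (Polynomial K × Polynomial K)) (P : Polynomial K) :
    Path K ((P, Q, W0) ::ₘ (L.map (fun p => (p.1, Q, p.2)) + Tr))
      ((P - l • (L.map Prod.fst).sum, Q, W0) ::ₘ
        (L.map (fun p => (p.1, Q, p.2 + l • W0)) + Tr)) (Multiset.card L) 0 := by
  induction L using Multiset.induction generalizing P Tr with
  | empty => simpa using Path.refl _
  | cons pw L ih =>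
      simp only [Multiset.map_cons, Multiset.sum_cons, Multiset.card_cons, Multiset.cons_add]
      refine Path.flip ⟨L.map (fun p => (p.1, Q, p.2)) + Tr, l,
        Or.inr (Or.inl ⟨Q, P, W0, pw.1, pw.2, rfl, rfl⟩)⟩ ?_
      refine Path.cast' ?_ ?_ rfl rfl (ih ((pw.1, Q, pw.2 + l • W0) ::ₘ Tr) (P - l • pw.1))
      · rw [Multiset.add_cons]
      · rw [Multiset.add_cons, smul_add, sub_sub]

theorem sum_key (a b : K) (n : ℕ) :
    (∑ i ∈ Finset.range (n + 1), Polynomial.C (a ^ i) * Polynomial.X ^ i)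
      + ∑ i ∈ Finset.Icc 1 n, Polynomial.C (b ^ i - a ^ i) * Polynomial.X ^ i
      = ∑ i ∈ Finset.range (n + 1), Polynomial.C (b ^ i) * Polynomial.X ^ i := by
  have h0 : (∑ i ∈ Finset.Icc 1 n, Polynomial.C (b ^ i - a ^ i) * Polynomial.X ^ i : Polynomial K)
      = ∑ i ∈ Finset.range (n + 1), Polynomial.C (b ^ i - a ^ i) * Polynomial.X ^ i := by
    rw [Finset.range_eq_Ico, Finset.sum_eq_sum_Ico_succ_bot (Nat.succ_pos n),
      ← Finset.Ico_add_one_right_eq_Icc]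
    simp
  rw [h0, ← Finset.sum_add_distrib]
  refine Finset.sum_congr rfl fun i _ => ?_
  rw [map_sub]; ring

theorem hms (a b : Triple K) (M : Multiset (Triple K)) :
    a ::ₘ (M + {b}) = b ::ₘ a ::ₘ M := by
  rw [add_comm, Multiset.singleton_add, Multiset.cons_swap]

end FlipGraph


/-- Lemma C of the paper.  Let `K` be a field, `x ≠ y` in `K`, and let
`cy, T 0, T 1, …, T n ∈ K[x]` be arbitrary polynomials.  It takes no more than `2n+1` flips to
get from the representation consisting of the triple
`(∑_{i=0}^n x^i a_i, ∑_{j=0}^m x^j b_j, cy + T 0)`, the triples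
`((y^i − x^i) a_i, ∑_{j=0}^m x^j b_j, cy + T i)` for `i = 1, …, n`, and the triple
`(∑_{i=0}^n y^i a_i, ∑_{i=1}^m (y^i − x^i) b_i, cy)`, to the representation consisting of the
triple `(∑_{i=0}^n x^i a_i, ∑_{j=0}^m x^j b_j, T 0)`, the triples
`((y^i − x^i) a_i, ∑_{j=0}^m x^j b_j, T i)` for `i = 1, …, n`, and the triple
`(∑_{i=0}^n y^i a_i, ∑_{j=0}^m y^j b_j, cy)`. -/
theorem lemmaC (K : Type) [Field K] (n m : ℕ) (x y : K) (hxy : x ≠ y)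
    (cy : Polynomial K) (T : ℕ → Polynomial K) :
    ∃ f ≤ 2 * n + 1,
      Path K
        ((∑ i ∈ Finset.range (n + 1), C (x ^ i) * X ^ i,
          ∑ j ∈ Finset.range (m + 1), C (x ^ j) * X ^ j,
          cy + T 0) ::ₘ
         (∑ i ∈ Finset.range (n + 1), C (y ^ i) * X ^ i,
          ∑ i ∈ Finset.Icc 1 m, C (y ^ i - x ^ i) * X ^ i,
          cy) ::ₘ
         ((Finset.Icc 1 n).val.map fun i =>
           (C (y ^ i - x ^ i) * X ^ i,
            ∑ j ∈ Finset.range (m + 1), C (x ^ j) * X ^ j,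
            cy + T i)))
        ((∑ i ∈ Finset.range (n + 1), C (x ^ i) * X ^ i,
          ∑ j ∈ Finset.range (m + 1), C (x ^ j) * X ^ j,
          T 0) ::ₘ
         (∑ i ∈ Finset.range (n + 1), C (y ^ i) * X ^ i,
          ∑ j ∈ Finset.range (m + 1), C (y ^ j) * X ^ j,
          cy) ::ₘ
         ((Finset.Icc 1 n).val.map fun i =>
           (C (y ^ i - x ^ i) * X ^ i,
            ∑ j ∈ Finset.range (m + 1), C (x ^ j) * X ^ j,
            T i)))
        f 0 := by
  
  clear hxy
  refine ⟨2 * n + 1, le_rfl, ?_⟩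
  set Px : Polynomial K := ∑ i ∈ Finset.range (n + 1), C (x ^ i) * X ^ i with hPx
  set Py : Polynomial K := ∑ i ∈ Finset.range (n + 1), C (y ^ i) * X ^ i with hPy
  set Qx : Polynomial K := ∑ j ∈ Finset.range (m + 1), C (x ^ j) * X ^ j with hQx
  set Qy : Polynomial K := ∑ j ∈ Finset.range (m + 1), C (y ^ j) * X ^ j with hQy
  set Qd : Polynomial K := ∑ i ∈ Finset.Icc 1 m, C (y ^ i - x ^ i) * X ^ i with hQd
  set L : Multiset (Polynomial K × Polynomial K) :=
    (Finset.Icc 1 n).val.map (fun i => ((C (y ^ i - x ^ i) * X ^ i : Polynomial K), cy + T i))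
    with hL
  set L₂ : Multiset (Polynomial K × Polynomial K) :=
    L.map (fun p => (p.1, p.2 + (-1 : K) • (cy + T 0))) with hL₂
  have hsum : (L.map Prod.fst).sum = ∑ i ∈ Finset.Icc 1 n, C (y ^ i - x ^ i) * X ^ i := by
    rw [hL, Multiset.map_map]; rfl
  have hcard : Multiset.card L = n := by
    simp [hL]
  have hcard₂ : Multiset.card L₂ = n := by
    rw [hL₂, Multiset.card_map, hcard]
  have hPyx : Px - (-1 : K) • (L.map Prod.fst).sum = Py := by
    rw [hsum, neg_smul, one_smul, sub_neg_eq_add, hPx, hPy]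
    exact sum_key x y n
  have hPxy : Py - (1 : K) • (L₂.map Prod.fst).sum = Px := by
    have : L₂.map Prod.fst = L.map Prod.fst := by
      rw [hL₂, Multiset.map_map]; rfl
    rw [this, one_smul, hsum, hPx, hPy]
    linear_combination -(sum_key x y n)
  have hQyx : Qd - (-1 : K) • Qx = Qy := by
    rw [neg_smul, one_smul, sub_neg_eq_add, add_comm, hQx, hQy, hQd]
    exact sum_key x y m
  have hT0 : (cy + T 0) + (-1 : K) • cy = T 0 := by
    rw [neg_smul, one_smul]; ring
  -- phase 1
  have p1 : Path K
      ((Px, Qx, cy + T 0) ::ₘ (L.map (fun p => (p.1, Qx, p.2)) + {(Py, Qd, cy)}))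
      ((Px - (-1 : K) • (L.map Prod.fst).sum, Qx, cy + T 0) ::ₘ
        (L.map (fun p => (p.1, Qx, p.2 + (-1 : K) • (cy + T 0))) + {(Py, Qd, cy)}))
      (Multiset.card L) 0 :=
    batch' (-1) Qx (cy + T 0) _ L Px
  -- phase 3
  have p3 : Path K
      ((Py, Qx, T 0) ::ₘ (L₂.map (fun p => (p.1, Qx, p.2)) + {(Py, Qy, cy)}))
      ((Py - (1 : K) • (L₂.map Prod.fst).sum, Qx, T 0) ::ₘ
        (L₂.map (fun p => (p.1, Qx, p.2 + (1 : K) • T 0)) + {(Py, Qy, cy)}))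
      (Multiset.card L₂) 0 :=
    batch' 1 Qx (T 0) _ L₂ Py
  -- cast phase 3 endpoints
  have p3' : Path K
      ((Py, Qx, (cy + T 0) + (-1 : K) • cy) ::ₘ
        (L.map (fun p => (p.1, Qx, p.2 + (-1 : K) • (cy + T 0))) + {(Py, Qy, cy)}))
      ((Px, Qx, T 0) ::ₘ (Py, Qy, cy) ::ₘ
        ((Finset.Icc 1 n).val.map fun i => (C (y ^ i - x ^ i) * X ^ i, Qx, T i)))
      n 0 := by
    refine Path.cast' ?_ ?_ hcard₂ rfl p3
    · rw [hT0, hL₂, Multiset.map_map]; rfl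
    · rw [hPxy, hms, Multiset.cons_swap]
      congr 1
      congr 1
      rw [hL₂, Multiset.map_map, hL, Multiset.map_map]
      refine Multiset.map_congr rfl fun i _ => ?_
      simp only [Function.comp_apply, neg_smul, one_smul, Prod.mk.injEq, true_and]
      ring
  -- the middle flip plus phase 3
  have pmid : Path K
      ((Px - (-1 : K) • (L.map Prod.fst).sum, Qx, cy + T 0) ::ₘ
        (L.map (fun p => (p.1, Qx, p.2 + (-1 : K) • (cy + T 0))) + {(Py, Qd, cy)}))
      ((Px, Qx, T 0) ::ₘ (Py, Qy, cy) ::ₘ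
        ((Finset.Icc 1 n).val.map fun i => (C (y ^ i - x ^ i) * X ^ i, Qx, T i)))
      (n + 1) 0 := by
    refine Path.cast'
      (show (Py, Qd, cy) ::ₘ (Py, Qx, cy + T 0) ::ₘ
          (L.map (fun p => (p.1, Qx, p.2 + (-1 : K) • (cy + T 0)))) = _ from ?_) rfl rfl rfl
      (Path.flip ⟨L.map (fun p => (p.1, Qx, p.2 + (-1 : K) • (cy + T 0))), -1,
        Or.inl ⟨Py, Qd, cy, Qx, cy + T 0, rfl, rfl⟩⟩ ?_)
    · rw [hPyx, hms]
    · rw [hQyx]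
      exact Path.cast' (hms _ _ _) rfl rfl rfl p3'
  have ptot := Path.trans' p1 pmid
  refine Path.cast' ?_ rfl ?_ rfl ptot
  · rw [hms, Multiset.cons_swap]
    congr 1
    congr 1
    rw [hL, Multiset.map_map]
    rfl
  · rw [hcard]; omega
end

section
/- Let K be an arbitrary field and n ≥ 1. Then the rank of the polynomial multiplication tensor T_{n,1} over K is at most ⌈(3/2)(n+1)⌉, i.e. there exist u_ℓ ∈ K[x] of degree ≤ n, v_ℓ ∈ K[x] of degree ≤ 1, w_ℓ ∈ K[x] of degree ≤ n+1, ℓ = 1, …, ⌈(3/2)(n+1)⌉, with T_{n,1} = ∑_ℓ u_ℓ ⊗ v_ℓ ⊗ w_ℓ. -/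
open Polynomial TensorProduct


lemma degXpow_le (K : Type) [Field K] {a b : ℕ} (h : a ≤ b) :
    ((X : Polynomial K) ^ a).degree ≤ (b : ℕ) := by
  rw [degree_X_pow]; exact_mod_cast h

lemma degXsub_le (K : Type) [Field K] {a b c : ℕ} (ha : a ≤ c) (hb : b ≤ c) :
    ((X : Polynomial K) ^ a - X ^ b).degree ≤ ((c : ℕ) : WithBot ℕ) :=
  le_trans (degree_sub_le _ _) (max_le (degXpow_le K ha) (degXpow_le K hb))

lemma degXadd_le (K : Type) [Field K] {a b c : ℕ} (ha : a ≤ c) (hb : b ≤ c) :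
    ((X : Polynomial K) ^ a + X ^ b).degree ≤ ((c : ℕ) : WithBot ℕ) :=
  le_trans (degree_add_le _ _) (max_le (degXpow_le K ha) (degXpow_le K hb))

def goodDecompAux (K : Type) [Field K] (n r : ℕ) : Prop :=
  ∃ u v w : Fin r → Polynomial K,
    (∀ l, (u l).degree ≤ (n : ℕ)) ∧
    (∀ l, (v l).degree ≤ (1 : ℕ)) ∧
    (∀ l, (w l).degree ≤ ((n + 1 : ℕ))) ∧
    ∑ l, (u l) ⊗ₜ[K] ((v l) ⊗ₜ[K] (w l))
      = ∑ i ∈ Finset.range (n + 1), ∑ j ∈ Finset.range 2,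
          ((X : Polynomial K) ^ i) ⊗ₜ[K]
            (((X : Polynomial K) ^ j) ⊗ₜ[K] ((X : Polynomial K) ^ (i + j)))

lemma goodDecompAux_one (K : Type) [Field K] : goodDecompAux K 1 3 := by
  refine ⟨![X ^ 0, X ^ 1, X ^ 0 + X ^ 1], ![X ^ 0, X ^ 1, X ^ 0 + X ^ 1],
          ![X ^ 0 - X ^ 1, X ^ 2 - X ^ 1, X ^ 1], ?_, ?_, ?_, ?_⟩
  · intro l
    fin_cases l <;>
      first
        | exact degXpow_le K (by omega)
        | exact degXadd_le K (by omega) (by omega)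
  · intro l
    fin_cases l <;>
      first
        | exact degXpow_le K (by omega)
        | exact degXadd_le K (by omega) (by omega)
  · intro l
    fin_cases l <;>
      first
        | exact degXpow_le K (by omega)
        | exact degXsub_le K (by omega) (by omega)
  · simp [Fin.sum_univ_three, Finset.sum_range_succ, tmul_add, add_tmul, tmul_sub, sub_tmul]
    abel

lemma goodDecompAux_two (K : Type) [Field K] : goodDecompAux K 2 5 := by
  refine ⟨![X ^ 0, X ^ 1, X ^ 0 + X ^ 1, X ^ 2, X ^ 2],
          ![X ^ 0, X ^ 1, X ^ 0 + X ^ 1, X ^ 0, X ^ 1],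
          ![X ^ 0 - X ^ 1, X ^ 2 - X ^ 1, X ^ 1, X ^ 2, X ^ 3], ?_, ?_, ?_, ?_⟩
  · intro l
    fin_cases l <;>
      first
        | exact degXpow_le K (by omega)
        | exact degXadd_le K (by omega) (by omega)
  · intro l
    fin_cases l <;>
      first
        | exact degXpow_le K (by omega)
        | exact degXadd_le K (by omega) (by omega)
  · intro l
    fin_cases l <;>
      first
        | exact degXpow_le K (by omega)
        | exact degXsub_le K (by omega) (by omega)
  · simp [Fin.sum_univ_five, Finset.sum_range_succ, tmul_add, add_tmul, tmul_sub, sub_tmul]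
    abel

lemma goodDecompAux_step (K : Type) [Field K] (n r : ℕ) (h : goodDecompAux K n r) :
    goodDecompAux K (n + 2) (r + 3) := by
  obtain ⟨u, v, w, hu, hv, hw, hT⟩ := h
  refine ⟨Fin.append u ![X ^ (n + 1), X ^ (n + 2), X ^ (n + 1) + X ^ (n + 2)],
          Fin.append v ![1, X, 1 + X],
          Fin.append w ![X ^ (n + 1) - X ^ (n + 2), X ^ (n + 3) - X ^ (n + 2), X ^ (n + 2)],
          ?_, ?_, ?_, ?_⟩
  · intro l
    refine Fin.addCases (fun i => ?_) (fun i => ?_) l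
    · rw [Fin.append_left]
      exact (hu i).trans (by exact_mod_cast by omega)
    · rw [Fin.append_right]
      fin_cases i <;> simp [degree_X_pow] <;>
        first
          | exact le_trans (degree_add_le _ _) (by simp [degree_X_pow]; exact_mod_cast by omega)
          | exact_mod_cast by omega
  · intro l
    refine Fin.addCases (fun i => ?_) (fun i => ?_) l
    · rw [Fin.append_left]; exact hv i
    · rw [Fin.append_right]
      fin_cases i <;> simp <;>
        exact le_trans (degree_add_le _ _) (by simp)
  · intro l
    refine Fin.addCases (fun i => ?_) (fun i => ?_) l
    · rw [Fin.append_left]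
      exact (hw i).trans (by exact_mod_cast by omega)
    · rw [Fin.append_right]
      fin_cases i <;> simp [degree_X_pow] <;>
        first
          | exact le_trans (degree_sub_le _ _) (by simp [degree_X_pow]; exact_mod_cast by omega)
          | exact_mod_cast by omega
  · rw [Fin.sum_univ_add]
    simp only [Fin.append_left, Fin.append_right]
    rw [hT, show n + 2 + 1 = (n + 1) + 1 + 1 from rfl, Finset.sum_range_succ,
        Finset.sum_range_succ]
    simp only [Finset.sum_range_succ, Finset.sum_range_zero, Fin.sum_univ_three,
      Matrix.cons_val_zero, Matrix.cons_val_one, Matrix.head_cons,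
      Matrix.cons_val_two, Matrix.tail_cons,
      pow_zero, pow_one, add_zero, zero_add,
      tmul_add, add_tmul, tmul_sub, sub_tmul,
      show n + 1 + 1 = n + 2 from rfl, show n + 2 + 1 = n + 3 from rfl]
    abel

/-- Let `K` be an arbitrary field and `n ≥ 1`.  Then the rank of the
polynomial multiplication tensor `T_{n,1}` over `K` is at most `⌈(3/2)(n+1)⌉`: there exist
`u_ℓ` of degree `≤ n`, `v_ℓ` of degree `≤ 1`, `w_ℓ` of degree `≤ n+1`,
`ℓ = 1, …, ⌈(3/2)(n+1)⌉`, with `T_{n,1} = ∑_ℓ u_ℓ ⊗ v_ℓ ⊗ w_ℓ`. -/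
theorem mulTensor_deg_one_rank_le (K : Type) [Field K] (n : ℕ) (hn : 1 ≤ n) :
    ∃ u v w : Fin ((3 * (n + 1) + 1) / 2) → Polynomial K,
      (∀ l, (u l).degree ≤ (n : ℕ)) ∧
      (∀ l, (v l).degree ≤ (1 : ℕ)) ∧
      (∀ l, (w l).degree ≤ ((n + 1 : ℕ))) ∧
      ∑ l, (u l) ⊗ₜ[K] ((v l) ⊗ₜ[K] (w l))
        = ∑ i ∈ Finset.range (n + 1), ∑ j ∈ Finset.range 2,
            ((X : Polynomial K) ^ i) ⊗ₜ[K]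
              (((X : Polynomial K) ^ j) ⊗ₜ[K] ((X : Polynomial K) ^ (i + j))) := by
  suffices h : goodDecompAux K n ((3 * (n + 1) + 1) / 2) from h
  clear hn
  induction n using Nat.strong_induction_on with
  | _ n ih =>
    match n with
    | 0 =>
        refine ⟨![X ^ 0, X ^ 0], ![X ^ 0, X ^ 1], ![X ^ 0, X ^ 1], ?_, ?_, ?_, ?_⟩
        · intro l; fin_cases l <;> exact degXpow_le K (by omega)
        · intro l; fin_cases l <;> exact degXpow_le K (by omega)
        · intro l; fin_cases l <;> exact degXpow_le K (by omega)
        · simp [Fin.sum_univ_two, Finset.sum_range_succ]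
    | 1 => exact goodDecompAux_one K
    | 2 => exact goodDecompAux_two K
    | (m + 3) =>
        have h := goodDecompAux_step K (m + 1) ((3 * (m + 2) + 1) / 2)
          (ih (m + 1) (by omega))
        have hr : (3 * (m + 2) + 1) / 2 + 3 = (3 * (m + 3 + 1) + 1) / 2 := by omega
        rwa [hr, show m + 1 + 2 = m + 3 from rfl] at h
end

section
/- Let K be any field and n ≥ 0. In K[x] ⊗_K K[x] ⊗_K K[x] one has ∑_{i=0}^{n+2} ∑_{j=0}^{1} a_i ⊗ b_j ⊗ c_{i+j} = ∑_{i=0}^{n} ∑_{j=0}^{1} a_i ⊗ b_j ⊗ c_{i+j} + a_{n+1} ⊗ b_0 ⊗ (c_{n+1} − c_{n+2}) + (a_{n+1} + a_{n+2}) ⊗ (b_0 + b_1) ⊗ c_{n+2} + a_{n+2} ⊗ b_1 ⊗ (c_{n+3} − c_{n+2}). In particular, the standard representation of T_{n+2,1} differs from that of T_{n,1} by three additional rank-one tensors, so increasing n by 2 raises the rank of T_{n,1} by no more than 3. -/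
open Polynomial TensorProduct

/-- Let `K` be any field and `n ≥ 0`.  In `K[x] ⊗ K[x] ⊗ K[x]` one has
`T_{n+2,1} = T_{n,1} + a_{n+1} ⊗ b_0 ⊗ (c_{n+1} − c_{n+2})
+ (a_{n+1} + a_{n+2}) ⊗ (b_0 + b_1) ⊗ c_{n+2} + a_{n+2} ⊗ b_1 ⊗ (c_{n+3} − c_{n+2})`.
In particular, the standard representation of `T_{n+2,1}` differs from that of `T_{n,1}` by
three additional rank-one tensors, so increasing `n` by 2 raises the rank of `T_{n,1}` by no
more than 3. -/
theorem mulTensor_deg_one_step_two (K : Type) [Field K] (n : ℕ) :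
    ∑ i ∈ Finset.range (n + 3), ∑ j ∈ Finset.range 2,
        ((X : Polynomial K) ^ i) ⊗ₜ[K]
          (((X : Polynomial K) ^ j) ⊗ₜ[K] ((X : Polynomial K) ^ (i + j)))
    = (∑ i ∈ Finset.range (n + 1), ∑ j ∈ Finset.range 2,
        ((X : Polynomial K) ^ i) ⊗ₜ[K]
          (((X : Polynomial K) ^ j) ⊗ₜ[K] ((X : Polynomial K) ^ (i + j))))
      + ((X : Polynomial K) ^ (n + 1)) ⊗ₜ[K]
          ((1 : Polynomial K) ⊗ₜ[K] ((X : Polynomial K) ^ (n + 1) - (X : Polynomial K) ^ (n + 2)))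
      + ((X : Polynomial K) ^ (n + 1) + (X : Polynomial K) ^ (n + 2)) ⊗ₜ[K]
          (((1 : Polynomial K) + X) ⊗ₜ[K] ((X : Polynomial K) ^ (n + 2)))
      + ((X : Polynomial K) ^ (n + 2)) ⊗ₜ[K]
          ((X : Polynomial K) ⊗ₜ[K] ((X : Polynomial K) ^ (n + 3) - (X : Polynomial K) ^ (n + 2))) := by
  have h1 : n + 1 + 1 = n + 2 := rfl
  have h2 : n + 2 + 1 = n + 3 := rfl
  rw [show n + 3 = (n+1)+1+1 from rfl, Finset.sum_range_succ, Finset.sum_range_succ]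
  simp only [Finset.sum_range_succ, Finset.sum_range_zero, zero_add, add_zero, pow_zero, pow_one,
    h1, h2, tmul_add, tmul_sub, add_tmul, sub_tmul]
  abel
end

section
/- Let K = Z_2 be the field with two elements. There do not exist polynomials u_ℓ ∈ K[x] of degree ≤ 2, v_ℓ ∈ K[x] of degree ≤ 2, w_ℓ ∈ K[x] of degree ≤ 4, ℓ = 1, …, 5, such that ∑_{ℓ=1}^5 u_ℓ ⊗ v_ℓ ⊗ w_ℓ = T_{2,2}. In particular, the rank of the polynomial multiplication tensor for degrees 2 and 2 over Z_2 is strictly greater than 5. -/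
open Polynomial TensorProduct

namespace Aux13

abbrev K2 := ZMod 2
abbrev P2 := Polynomial K2

noncomputable def inner2 (j k : ℕ) : P2 →ₗ[K2] P2 →ₗ[K2] K2 :=
  LinearMap.mk₂ K2 (fun q r => q.coeff j * r.coeff k)
    (by intros; simp [add_mul])
    (by intros; simp [smul_eq_mul, mul_assoc])
    (by intros; simp [mul_add])
    (by intro c q r; simp [smul_eq_mul]; ring)

noncomputable def phi (i j k : ℕ) : P2 ⊗[K2] (P2 ⊗[K2] P2) →ₗ[K2] K2 :=
  TensorProduct.lift
    (LinearMap.mk₂ K2 (fun p t => p.coeff i * TensorProduct.lift (inner2 j k) t)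
      (by intros; simp [add_mul])
      (by intros; simp [smul_eq_mul, mul_assoc])
      (by intros; simp [mul_add])
      (by intro c q r; simp [smul_eq_mul]; ring))

@[simp] lemma phi_tmul (i j k : ℕ) (p q r : P2) :
    phi i j k (p ⊗ₜ[K2] (q ⊗ₜ[K2] r)) = p.coeff i * (q.coeff j * r.coeff k) := by
  simp [phi, inner2, mul_assoc]

lemma hankel_step : ∀ a b : Fin 3 → K2,
    a 0 * b 1 = a 1 * b 0 → a 0 * b 2 = a 1 * b 1 → a 1 * b 1 = a 2 * b 0 →
    a 1 * b 2 = a 2 * b 1 → a 0 * b 1 = a 1 * b 1 := by decide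

end Aux13

/-- Let `K = ℤ/2` be the field with two elements.  There do not exist
polynomials `u_ℓ` of degree `≤ 2`, `v_ℓ` of degree `≤ 2`, `w_ℓ` of degree `≤ 4`,
`ℓ = 1, …, 5`, such that `∑_{ℓ=1}^5 u_ℓ ⊗ v_ℓ ⊗ w_ℓ = T_{2,2}`.  In particular, the rank of
the polynomial multiplication tensor for degrees 2 and 2 over `ℤ/2` is strictly greater
than 5. -/
theorem mulTensor_two_two_no_rank_five :
    ¬ ∃ u v w : Fin 5 → Polynomial (ZMod 2),
      (∀ l, (u l).degree ≤ (2 : ℕ)) ∧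
      (∀ l, (v l).degree ≤ (2 : ℕ)) ∧
      (∀ l, (w l).degree ≤ (4 : ℕ)) ∧
      ∑ l, (u l) ⊗ₜ[ZMod 2] ((v l) ⊗ₜ[ZMod 2] (w l))
        = ∑ i ∈ Finset.range 3, ∑ j ∈ Finset.range 3,
            ((X : Polynomial (ZMod 2)) ^ i) ⊗ₜ[ZMod 2]
              (((X : Polynomial (ZMod 2)) ^ j) ⊗ₜ[ZMod 2]
                ((X : Polynomial (ZMod 2)) ^ (i + j))) := by
  rintro ⟨u, v, w, -, -, -, heq⟩
  -- Step 1: coefficient equations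
  have key : ∀ (i j : Fin 3) (k : Fin 5),
      (∑ l : Fin 5, (u l).coeff i * ((v l).coeff j * (w l).coeff k))
        = if (i : ℕ) + (j : ℕ) = (k : ℕ) then 1 else 0 := by
    intro i j k
    have h := congrArg (Aux13.phi i j k) heq
    simp only [map_sum, Aux13.phi_tmul] at h
    rw [h]
    fin_cases i <;> fin_cases j <;> fin_cases k <;>
      simp [Finset.sum_range_succ, coeff_X_pow]
  -- Step 2: the 5×5 coefficient matrix of the w's is invertible
  set C : Matrix (Fin 5) (Fin 5) (ZMod 2) := Matrix.of fun l k => (w l).coeff k with hCdef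
  have hCg : ∀ g : Fin 5 → ZMod 2, C.mulVec g = 0 → g = 0 := by
    intro g hg
    have hz : ∀ i j : Fin 3,
        (∑ k : Fin 5, (if (i : ℕ) + (j : ℕ) = (k : ℕ) then (1 : ZMod 2) else 0) * g k) = 0 := by
      intro i j
      have h1 : (∑ k : Fin 5, (if (i : ℕ) + (j : ℕ) = (k : ℕ) then (1 : ZMod 2) else 0) * g k)
          = ∑ k : Fin 5, (∑ l : Fin 5, (u l).coeff i * ((v l).coeff j * (w l).coeff k)) * g k := by
        refine Finset.sum_congr rfl fun k _ => ?_
        rw [key i j k]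
      rw [h1]
      simp only [Finset.sum_mul]
      rw [Finset.sum_comm]
      have h2 : ∀ l : Fin 5,
          (∑ k : Fin 5, (u l).coeff i * ((v l).coeff j * (w l).coeff k) * g k)
            = (u l).coeff i * (v l).coeff j * (C.mulVec g l) := by
        intro l
        rw [Matrix.mulVec, dotProduct, Finset.mul_sum]
        refine Finset.sum_congr rfl fun k _ => ?_
        simp [hCdef]; ring
      calc (∑ l : Fin 5, ∑ k : Fin 5, (u l).coeff i * ((v l).coeff j * (w l).coeff k) * g k)
          = ∑ l : Fin 5, (u l).coeff i * (v l).coeff j * (C.mulVec g l) :=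
            Finset.sum_congr rfl fun l _ => h2 l
        _ = 0 := by rw [hg]; simp
    funext k
    fin_cases k
    · simpa [Fin.sum_univ_five, show ((2:Fin 5):ℕ) = 2 from rfl, show ((3:Fin 5):ℕ) = 3 from rfl,
        show ((4:Fin 5):ℕ) = 4 from rfl] using hz 0 0
    · simpa [Fin.sum_univ_five, show ((2:Fin 5):ℕ) = 2 from rfl, show ((3:Fin 5):ℕ) = 3 from rfl,
        show ((4:Fin 5):ℕ) = 4 from rfl] using hz 0 1
    · simpa [Fin.sum_univ_five, show ((2:Fin 5):ℕ) = 2 from rfl, show ((3:Fin 5):ℕ) = 3 from rfl,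
        show ((4:Fin 5):ℕ) = 4 from rfl] using hz 0 2
    · simpa [Fin.sum_univ_five, show ((2:Fin 5):ℕ) = 2 from rfl, show ((3:Fin 5):ℕ) = 3 from rfl,
        show ((4:Fin 5):ℕ) = 4 from rfl] using hz 1 2
    · simpa [Fin.sum_univ_five, show ((2:Fin 5):ℕ) = 2 from rfl, show ((3:Fin 5):ℕ) = 3 from rfl,
        show ((4:Fin 5):ℕ) = 4 from rfl] using hz 2 2
  have hdet : IsUnit C.det := by
    rw [isUnit_iff_ne_zero]
    intro h0
    obtain ⟨g, hg0, hg⟩ := (Matrix.exists_mulVec_eq_zero_iff).mpr h0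
    exact hg0 (hCg g hg)
  have hCD : C * C⁻¹ = 1 := Matrix.mul_nonsing_inv C hdet
  -- Step 3: each rank-one piece is a Hankel matrix
  have hM : ∀ (l : Fin 5) (i j : Fin 3),
      (u l).coeff i * (v l).coeff j
        = ∑ k : Fin 5, C⁻¹ k l * (if (i : ℕ) + (j : ℕ) = (k : ℕ) then 1 else 0) := by
    intro l i j
    have h1 : (u l).coeff i * (v l).coeff j
        = ∑ l' : Fin 5, ((C * C⁻¹) l' l) * ((u l').coeff i * (v l').coeff j) := by
      rw [hCD]
      simp [Matrix.one_apply]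
    rw [h1]
    simp only [Matrix.mul_apply]
    calc (∑ l' : Fin 5, (∑ k : Fin 5, C l' k * C⁻¹ k l) * ((u l').coeff i * (v l').coeff j))
        = ∑ l' : Fin 5, ∑ k : Fin 5,
            C⁻¹ k l * ((u l').coeff i * ((v l').coeff j * C l' k)) := by
          refine Finset.sum_congr rfl fun l' _ => ?_
          rw [Finset.sum_mul]
          refine Finset.sum_congr rfl fun k _ => by ring
      _ = ∑ k : Fin 5, C⁻¹ k l *
            (∑ l' : Fin 5, (u l').coeff i * ((v l').coeff j * (w l').coeff k)) := by
          rw [Finset.sum_comm]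
          refine Finset.sum_congr rfl fun k _ => ?_
          rw [Finset.mul_sum]
          exact Finset.sum_congr rfl fun l' _ => by simp [hCdef]
      _ = ∑ k : Fin 5, C⁻¹ k l * (if (i : ℕ) + (j : ℕ) = (k : ℕ) then 1 else 0) := by
          refine Finset.sum_congr rfl fun k _ => ?_
          rw [key i j k]
  have hankel : ∀ l : Fin 5,
      (u l).coeff 0 * (v l).coeff 1 = (u l).coeff 1 * (v l).coeff 1 := by
    intro l
    have e01 := hM l 0 1
    have e10 := hM l 1 0
    have e02 := hM l 0 2
    have e11 := hM l 1 1
    have e20 := hM l 2 0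
    have e12 := hM l 1 2
    have e21 := hM l 2 1
    simp [Fin.sum_univ_five, show ((2:Fin 5):ℕ) = 2 from rfl, show ((3:Fin 5):ℕ) = 3 from rfl,
      show ((4:Fin 5):ℕ) = 4 from rfl, show ((2:Fin 3):ℕ) = 2 from rfl] at e01 e10 e02 e11 e20 e12 e21
    exact Aux13.hankel_step (fun i => (u l).coeff i) (fun j => (v l).coeff j)
      (e01.trans e10.symm) (e02.trans e11.symm) (e11.trans e20.symm) (e12.trans e21.symm)
  -- Step 4: contradiction
  have k01 := key 0 1 1
  have k11 := key 1 1 1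
  simp [Fin.isValue] at k01 k11
  have heqsum : (∑ l : Fin 5, (u l).coeff 0 * ((v l).coeff 1 * (w l).coeff 1))
      = ∑ l : Fin 5, (u l).coeff 1 * ((v l).coeff 1 * (w l).coeff 1) := by
    refine Finset.sum_congr rfl fun l _ => ?_
    have := hankel l
    calc (u l).coeff 0 * ((v l).coeff 1 * (w l).coeff 1)
        = ((u l).coeff 0 * (v l).coeff 1) * (w l).coeff 1 := by ring
      _ = ((u l).coeff 1 * (v l).coeff 1) * (w l).coeff 1 := by rw [this]
      _ = (u l).coeff 1 * ((v l).coeff 1 * (w l).coeff 1) := by ring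
  rw [heqsum, k11] at k01
  exact one_ne_zero k01.symm
end
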